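/- Let 𝒟 = {g ∈ C(𝕋, M₂(ℂ)) : g(z) = W g(−z) W* for all z ∈ 𝕋} and let u ∈ C(𝕋, M₂(ℂ)) be the unitary element u(z) = [[0, 1], [z, 0]]. Then the conjugation g ↦ u g u* maps 𝒟 onto the subalgebra {h ∈ C(𝕋, M₂(ℂ)) : h(z) = h(−z) for all z ∈ 𝕋} of even functions, and consequently 𝒟 is *-isomorphic to C(𝕋, M₂(ℂ)). (This realizes the isomorphism C(𝕋) ⋊ ℤ₂ ≅ M₂(C(𝕋)) used in the analysis of the fibers of CAR_Θ.) -/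

import Mathlib

open Complex Matrix

noncomputable section

abbrev TT : Type := Metric.sphere (0:ℂ) 1
abbrev M2 : Type := Matrix (Fin 2) (Fin 2) ℂ

def Wmat : M2 := !![1, 0; 0, -1]

lemma star_Wmat : star Wmat = Wmat := by
  ext i j
  fin_cases i <;> fin_cases j <;>
    simp [Wmat, Matrix.star_apply]

lemma Wmat_mul_Wmat : Wmat * Wmat = 1 := by
  ext i j
  fin_cases i <;> fin_cases j <;>
    simp [Wmat, Matrix.mul_apply, Fin.sum_univ_two, Matrix.one_apply]

lemma Wmat_mul_star : Wmat * star Wmat = 1 := by rw [star_Wmat, Wmat_mul_Wmat]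

lemma star_Wmat_mul : star Wmat * Wmat = 1 := by rw [star_Wmat, Wmat_mul_Wmat]

/-- The fixed-point algebra 𝒟 = {g ∈ C(𝕋, M₂(ℂ)) : g(z) = W g(−z) W*}, as a
unital *-subalgebra of C(𝕋, M₂(ℂ)). -/
def Dsub : StarSubalgebra ℂ C(TT, M2) where
  carrier := {g | ∀ z : TT, g z = Wmat * g (-z) * star Wmat}
  mul_mem' := by
    intro f g hf hg z
    simp only [ContinuousMap.mul_apply]
    rw [hf z, hg z]
    calc Wmat * f (-z) * star Wmat * (Wmat * g (-z) * star Wmat)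
        = Wmat * (f (-z) * (star Wmat * Wmat) * g (-z)) * star Wmat := by
          simp only [Matrix.mul_assoc]
      _ = Wmat * (f (-z) * g (-z)) * star Wmat := by
          rw [star_Wmat_mul, Matrix.mul_one]
  add_mem' := by
    intro f g hf hg z
    simp only [ContinuousMap.add_apply]
    rw [hf z, hg z, Matrix.mul_add, Matrix.add_mul]
  algebraMap_mem' := by
    intro c z
    simp only [algebraMap_apply]
    rw [Matrix.mul_smul, Matrix.smul_mul, Matrix.mul_one, Wmat_mul_star]
  star_mem' := by
    intro f hf z
    simp only [ContinuousMap.star_apply]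
    rw [hf z]
    simp only [Matrix.star_mul, star_star, star_Wmat, Matrix.mul_assoc]

/-- The unitary u(z) = [[0,1],[z,0]]. -/
def uMap (z : TT) : M2 := !![0, 1; (z : ℂ), 0]

namespace Stmt12Aux

lemma coe_norm (z : TT) : ‖(z:ℂ)‖ = 1 := mem_sphere_zero_iff_norm.mp z.2

lemma mul_conj' (z : TT) : (z:ℂ) * (starRingEnd ℂ) z = 1 := by
  rw [Complex.mul_conj]; norm_cast
  rw [Complex.normSq_eq_norm_sq, coe_norm, one_pow]

lemma conj_mul' (z : TT) : (starRingEnd ℂ) (z:ℂ) * z = 1 := by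
  rw [mul_comm]; exact mul_conj' z

lemma star_uMap (z : TT) : star (uMap z) = !![0, (starRingEnd ℂ) (z:ℂ); 1, 0] := by
  ext i j
  fin_cases i <;> fin_cases j <;> simp [uMap, Matrix.star_apply]

lemma uMap_mul_star (z : TT) : uMap z * star (uMap z) = 1 := by
  rw [star_uMap]
  ext i j
  fin_cases i <;> fin_cases j <;>
    simp [uMap, Matrix.mul_apply, Fin.sum_univ_two, Matrix.one_apply, mul_conj' z]

lemma star_uMap_mul (z : TT) : star (uMap z) * uMap z = 1 := by
  rw [star_uMap]
  ext i j
  fin_cases i <;> fin_cases j <;>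
    simp [uMap, Matrix.mul_apply, Fin.sum_univ_two, Matrix.one_apply, conj_mul' z]

lemma uMap_neg_mul_W (z : TT) : uMap (-z) * Wmat = -(uMap z) := by
  ext i j
  fin_cases i <;> fin_cases j <;>
    simp [uMap, Wmat, Matrix.mul_apply, Fin.sum_univ_two]

lemma W_mul_star_uMap_neg (z : TT) : Wmat * star (uMap (-z)) = -(star (uMap z)) := by
  have := congrArg star (uMap_neg_mul_W z)
  rw [Matrix.star_mul, star_Wmat, star_neg] at this
  exact this

/-- Key pointwise conjugation identity: for any matrices, conjugating the
`-z` value by `W` turns `u(-z)`-conjugation into `u(z)`-conjugation. -/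
lemma conj_flip (z : TT) (A : M2) :
    Wmat * (star (uMap (-z)) * A * uMap (-z)) * star Wmat =
      star (uMap z) * A * uMap z := by
  rw [star_Wmat]
  calc Wmat * (star (uMap (-z)) * A * uMap (-z)) * Wmat
      = (Wmat * star (uMap (-z))) * A * (uMap (-z) * Wmat) := by
        simp only [Matrix.mul_assoc]
    _ = (-(star (uMap z))) * A * (-(uMap z)) := by
        rw [W_mul_star_uMap_neg, uMap_neg_mul_W]
    _ = star (uMap z) * A * uMap z := by
        simp only [Matrix.neg_mul, Matrix.mul_neg, neg_neg]

lemma conj_flip' (z : TT) (A : M2) :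
    uMap (-z) * (Wmat * A * star Wmat) * star (uMap (-z)) =
      uMap z * A * star (uMap z) := by
  rw [star_Wmat]
  calc uMap (-z) * (Wmat * A * Wmat) * star (uMap (-z))
      = (uMap (-z) * Wmat) * A * (Wmat * star (uMap (-z))) := by
        simp only [Matrix.mul_assoc]
    _ = (-(uMap z)) * A * (-(star (uMap z))) := by
        rw [W_mul_star_uMap_neg, uMap_neg_mul_W]
    _ = uMap z * A * star (uMap z) := by
        simp only [Matrix.neg_mul, Matrix.mul_neg, neg_neg]

lemma continuous_uMap : Continuous (fun z : TT => uMap z) := by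
  apply continuous_matrix
  intro i j
  fin_cases i <;> fin_cases j <;> simp [uMap] <;> continuity

/-- `u` as a continuous map. -/
def Ucm : C(TT, M2) := ⟨fun z => uMap z, continuous_uMap⟩

@[simp] lemma Ucm_apply (z : TT) : Ucm z = uMap z := rfl

lemma Ucm_mul_star : Ucm * star Ucm = 1 := by
  ext1 z
  simp only [ContinuousMap.mul_apply, ContinuousMap.star_apply, Ucm_apply,
    ContinuousMap.one_apply]
  exact uMap_mul_star z

lemma star_Ucm_mul : star Ucm * Ucm = 1 := by
  ext1 z
  simp only [ContinuousMap.mul_apply, ContinuousMap.star_apply, Ucm_apply,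
    ContinuousMap.one_apply]
  exact star_uMap_mul z

/-- The conjugation `h ↦ u* h u`. -/
def conjU (h : C(TT, M2)) : C(TT, M2) := star Ucm * h * Ucm

lemma conjU_apply (h : C(TT, M2)) (z : TT) :
    conjU h z = star (uMap z) * h z * uMap z := rfl

lemma conjU_mem (h : C(TT, M2)) (he : ∀ z : TT, h z = h (-z)) : conjU h ∈ Dsub := by
  intro z
  rw [conjU_apply, conjU_apply, ← conj_flip z (h z)]
  rw [← he z]

lemma uMap_conjU (h : C(TT, M2)) (z : TT) :
    uMap z * conjU h z * star (uMap z) = h z := by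
  rw [conjU_apply]
  calc uMap z * (star (uMap z) * h z * uMap z) * star (uMap z)
      = (uMap z * star (uMap z)) * h z * (uMap z * star (uMap z)) := by
        simp only [Matrix.mul_assoc]
    _ = h z := by rw [uMap_mul_star, Matrix.one_mul, Matrix.mul_one]

lemma even_of_mem {g : C(TT, M2)} (hg : g ∈ Dsub) (z : TT) :
    uMap z * g z * star (uMap z) = uMap (-z) * g (-z) * star (uMap (-z)) := by
  have hgz : g (-z) = Wmat * g z * star Wmat := by
    have := hg (-z); rwa [neg_neg] at this
  rw [hgz, conj_flip' z (g z)]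

/-- The squaring map on the circle. -/
def sqMap : C(TT, TT) :=
  ⟨fun z => ⟨(z:ℂ) * (z:ℂ), by
      rw [mem_sphere_zero_iff_norm, norm_mul, coe_norm, one_mul]⟩,
    by exact Continuous.subtype_mk (continuous_subtype_val.mul continuous_subtype_val) _⟩

lemma sqMap_coe (z : TT) : ((sqMap z : TT) : ℂ) = (z:ℂ) * (z:ℂ) := rfl

lemma sqMap_neg (z : TT) : sqMap (-z) = sqMap z := by
  apply Subtype.ext
  rw [sqMap_coe, sqMap_coe, coe_neg_sphere, neg_mul_neg]

lemma sqMap_surjective : Function.Surjective (sqMap : TT → TT) := by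
  intro w
  have hw : ‖(w:ℂ)‖ = 1 := coe_norm w
  have hw0 : (w:ℂ) ≠ 0 := by
    intro h; rw [h] at hw; simp at hw
  set a : ℂ := Complex.exp (Complex.log (w:ℂ) / 2) with ha
  have hnorm : ‖a‖ = 1 := by
    rw [ha, Complex.norm_exp]
    have : (Complex.log (w:ℂ) / 2).re = Real.log ‖(w:ℂ)‖ / 2 := by
      rw [Complex.div_re]; simp [Complex.log_re]
    rw [this, hw, Real.log_one, zero_div, Real.exp_zero]
  refine ⟨⟨a, mem_sphere_zero_iff_norm.mpr hnorm⟩, ?_⟩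
  apply Subtype.ext
  rw [sqMap_coe]
  show a * a = (w:ℂ)
  rw [ha, ← Complex.exp_add, ← add_div, add_self_div_two, Complex.exp_log hw0]

lemma sq_eq_sq {z z' : TT} (h : sqMap z = sqMap z') : z = z' ∨ z = -z' := by
  have h' : (z:ℂ) * (z:ℂ) = (z':ℂ) * (z':ℂ) := congrArg Subtype.val h
  rcases mul_self_eq_mul_self_iff.mp h' with h1 | h1
  · exact Or.inl (Subtype.ext h1)
  · right; apply Subtype.ext; rw [coe_neg_sphere]; exact h1

lemma exists_desc (h : C(TT, M2)) (he : ∀ z : TT, h z = h (-z)) :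
    ∃ f : C(TT, M2), ∀ z : TT, f (sqMap z) = h z := by
  have hqm : Topology.IsQuotientMap (sqMap : TT → TT) :=
    (sqMap.continuous.isClosedMap).isQuotientMap sqMap.continuous sqMap_surjective
  set s : TT → TT := Function.surjInv sqMap_surjective with hs
  have hsec : ∀ w, sqMap (s w) = w := Function.surjInv_eq sqMap_surjective
  set f0 : TT → M2 := fun w => h (s w) with hf0
  have key : ∀ z : TT, f0 (sqMap z) = h z := by
    intro z
    have : sqMap (s (sqMap z)) = sqMap z := hsec _
    rcases sq_eq_sq this with h1 | h1
    · show h (s (sqMap z)) = h z; rw [h1]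
    · show h (s (sqMap z)) = h z; rw [h1, ← he z]
  have hcont : Continuous f0 := by
    rw [hqm.continuous_iff]
    have : f0 ∘ (sqMap : TT → TT) = fun z => h z := funext key
    rw [this]; exact h.continuous
  exact ⟨⟨f0, hcont⟩, key⟩

lemma conjU_mul (a b : C(TT, M2)) : conjU (a * b) = conjU a * conjU b := by
  unfold conjU
  have h : star Ucm * a * Ucm * (star Ucm * b * Ucm)
      = star Ucm * a * (Ucm * star Ucm) * b * Ucm := by simp only [mul_assoc]
  rw [h, Ucm_mul_star, mul_one, mul_assoc (star Ucm) a b]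

lemma conjU_add (a b : C(TT, M2)) : conjU (a + b) = conjU a + conjU b := by
  unfold conjU; rw [mul_add, add_mul]

lemma conjU_one : conjU 1 = 1 := by
  unfold conjU; rw [mul_one, star_Ucm_mul]

lemma conjU_zero : conjU 0 = 0 := by
  unfold conjU; rw [mul_zero, zero_mul]

lemma conjU_star (a : C(TT, M2)) : conjU (star a) = star (conjU a) := by
  unfold conjU
  rw [StarMul.star_mul, StarMul.star_mul, star_star, mul_assoc]

lemma conjU_smul (c : ℂ) (a : C(TT, M2)) : conjU (c • a) = c • conjU a := by
  unfold conjU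
  rw [mul_smul_comm, smul_mul_assoc]

lemma conjU_algebraMap (c : ℂ) :
    conjU (algebraMap ℂ C(TT, M2) c) = algebraMap ℂ C(TT, M2) c := by
  rw [Algebra.algebraMap_eq_smul_one, conjU_smul, conjU_one]

/-- The star algebra homomorphism `C(𝕋, M₂) → 𝒟`, `f ↦ u* (f ∘ sq) u`. -/
def Psi : C(TT, M2) →⋆ₐ[ℂ] Dsub where
  toFun f := ⟨conjU (f.comp sqMap),
    conjU_mem _ (fun z => by
      simp only [ContinuousMap.comp_apply]
      rw [sqMap_neg])⟩
  map_one' := Subtype.ext (by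
    show conjU ((1 : C(TT, M2)).comp sqMap) = (1 : C(TT, M2))
    rw [ContinuousMap.one_comp, conjU_one])
  map_mul' f g := Subtype.ext (by
    show conjU ((f * g).comp sqMap)
        = conjU (f.comp sqMap) * conjU (g.comp sqMap)
    rw [ContinuousMap.mul_comp, conjU_mul])
  map_zero' := Subtype.ext (by
    show conjU ((0 : C(TT, M2)).comp sqMap) = (0 : C(TT, M2))
    rw [ContinuousMap.zero_comp, conjU_zero])
  map_add' f g := Subtype.ext (by
    show conjU ((f + g).comp sqMap)
        = conjU (f.comp sqMap) + conjU (g.comp sqMap)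
    rw [ContinuousMap.add_comp, conjU_add])
  commutes' c := Subtype.ext (by
    show conjU ((algebraMap ℂ C(TT, M2) c).comp sqMap) = algebraMap ℂ C(TT, M2) c
    rw [Algebra.algebraMap_eq_smul_one, ContinuousMap.smul_comp,
      ContinuousMap.one_comp, conjU_smul, conjU_one,
      ← Algebra.algebraMap_eq_smul_one])
  map_star' f := Subtype.ext (by
    show conjU ((star f).comp sqMap) = star (conjU (f.comp sqMap))
    have : (star f).comp sqMap = star (f.comp sqMap) := by ext1 z; rfl
    rw [this, conjU_star])

lemma conjU_injective : Function.Injective conjU := by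
  intro a b hab
  have : Ucm * conjU a * star Ucm = Ucm * conjU b * star Ucm := by rw [hab]
  unfold conjU at this
  calc a = Ucm * (star Ucm * a * Ucm) * star Ucm := by
          rw [show Ucm * (star Ucm * a * Ucm) * star Ucm
              = (Ucm * star Ucm) * a * (Ucm * star Ucm) by simp only [mul_assoc],
            Ucm_mul_star, one_mul, mul_one]
    _ = Ucm * (star Ucm * b * Ucm) * star Ucm := this
    _ = b := by
          rw [show Ucm * (star Ucm * b * Ucm) * star Ucm
              = (Ucm * star Ucm) * b * (Ucm * star Ucm) by simp only [mul_assoc],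
            Ucm_mul_star, one_mul, mul_one]

lemma Psi_bijective : Function.Bijective Psi := by
  constructor
  · intro f f' hff
    have h1 : f.comp sqMap = f'.comp sqMap := by
      apply conjU_injective
      exact congrArg Subtype.val hff
    refine ContinuousMap.ext fun w => ?_
    obtain ⟨z, rfl⟩ := sqMap_surjective w
    exact ContinuousMap.congr_fun h1 z
  · rintro ⟨g, hg⟩
    have he : ∀ z : TT, (Ucm * g * star Ucm) z = (Ucm * g * star Ucm) (-z) := by
      intro z
      simp only [ContinuousMap.mul_apply, ContinuousMap.star_apply, Ucm_apply]
      exact even_of_mem hg z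
    obtain ⟨f, hf⟩ := exists_desc (Ucm * g * star Ucm) he
    refine ⟨f, Subtype.ext ?_⟩
    show conjU (f.comp sqMap) = g
    have hcomp : f.comp sqMap = Ucm * g * star Ucm :=
      ContinuousMap.ext fun z => hf z
    rw [hcomp]
    unfold conjU
    calc star Ucm * (Ucm * g * star Ucm) * Ucm
        = (star Ucm * Ucm) * g * (star Ucm * Ucm) := by simp only [mul_assoc]
      _ = g := by rw [star_Ucm_mul, one_mul, mul_one]

end Stmt12Aux

set_option synthInstance.maxHeartbeats 800000 in
open Stmt12Aux in
theorem stmt12 :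
    ({h : C(TT, M2) | ∃ g ∈ Dsub, ∀ z : TT, h z = uMap z * g z * star (uMap z)} =
      {h : C(TT, M2) | ∀ z : TT, h z = h (-z)}) ∧
    Nonempty (Dsub ≃⋆ₐ[ℂ] C(TT, M2)) := by
  constructor
  · ext h
    simp only [Set.mem_setOf_eq]
    constructor
    · rintro ⟨g, hg, hrep⟩ z
      rw [hrep z, hrep (-z)]
      exact even_of_mem hg z
    · intro he
      exact ⟨conjU h, conjU_mem h he, fun z => (uMap_conjU h z).symm⟩
  · exact ⟨(StarAlgEquiv.ofBijective (Psi : C(TT, M2) →⋆ₐ[ℂ] Dsub) Psi_bijective).symm⟩
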